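/- Suppose μ is an absolutely continuous probability measure on [0,1] whose density f satisfies f ∈ L^{p₁}[0,1] and 1/f ∈ L^{p₂}[0,1] for some p₁, p₂ ≥ 1 (with f nonzero almost everywhere). Then for all θ ∈ (0,1), the Assouad spectrum satisfies dim_A^θ μ ≤ 1 + (p₁ + θ p₂)/(p₁ p₂ (1−θ)). -/

import Mathlib

open Filter MeasureTheory
open scoped Topology ENNReal

/-- Auxiliary: Hölder upper bound for the measure of a set. -/
lemma aux_upper (f : ℝ → ℝ) (p₁ : ℝ) (hp₁ : 1 ≤ p₁) (hf : Measurable f)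
    (ν : Measure ℝ) (J₁ : ℝ≥0∞)
    (hJ₁ : ∫⁻ x, (ENNReal.ofReal (f x)) ^ p₁ ∂ν ≤ J₁)
    (s : Set ℝ) (hs : MeasurableSet s) :
    ∫⁻ x in s, ENNReal.ofReal (f x) ∂ν ≤ J₁ ^ (1/p₁) * (ν s) ^ (1 - 1/p₁) := by
  set F : ℝ → ℝ≥0∞ := fun x => ENNReal.ofReal (f x) with hF
  have hFm : Measurable F := hf.ennreal_ofReal
  rcases eq_or_lt_of_le hp₁ with h1 | h1
  · -- p₁ = 1
    have : (1 : ℝ) - 1/p₁ = 0 := by rw [← h1]; norm_num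
    rw [this, ENNReal.rpow_zero, mul_one]
    calc ∫⁻ x in s, F x ∂ν ≤ ∫⁻ x, F x ∂ν := setLIntegral_le_lintegral _ _
      _ = ∫⁻ x, F x ^ p₁ ∂ν := by
          rw [← h1]; simp
      _ ≤ J₁ := hJ₁
      _ = J₁ ^ (1/p₁) := by rw [← h1]; simp
  · -- 1 < p₁
    have hconj : p₁.HolderConjugate (p₁/(p₁-1)) := Real.HolderConjugate.conjExponent h1
    have hq : 1/(p₁/(p₁-1)) = 1 - 1/p₁ := by
      have := hconj.inv_add_inv_eq_inv
      rw [inv_one] at this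
      rw [one_div, one_div]
      linarith
    have hp₁0 : (0:ℝ) < p₁ := by linarith
    calc ∫⁻ x in s, F x ∂ν
        = ∫⁻ x, (F * (1 : ℝ → ℝ≥0∞)) x ∂(ν.restrict s) := by
          simp
      _ ≤ (∫⁻ x, F x ^ p₁ ∂(ν.restrict s)) ^ (1/p₁) *
          (∫⁻ x, (1:ℝ≥0∞) ^ (p₁/(p₁-1)) ∂(ν.restrict s)) ^ (1/(p₁/(p₁-1))) :=
          ENNReal.lintegral_mul_le_Lp_mul_Lq _ hconj hFm.aemeasurable aemeasurable_const
      _ ≤ J₁ ^ (1/p₁) * (ν s) ^ (1 - 1/p₁) := by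
          rw [hq]
          refine mul_le_mul' (ENNReal.rpow_le_rpow ?_ (by positivity)) (ENNReal.rpow_le_rpow ?_ (by
            have : 1/p₁ ≤ 1 := by
              rw [div_le_one hp₁0]; linarith
            linarith))
          · calc ∫⁻ x, F x ^ p₁ ∂(ν.restrict s) ≤ ∫⁻ x, F x ^ p₁ ∂ν :=
                setLIntegral_le_lintegral _ _
              _ ≤ J₁ := hJ₁
          · simp


/-- Auxiliary: reverse Hölder lower bound. -/
lemma aux_lower (f : ℝ → ℝ) (p₂ : ℝ) (hp₂ : 1 ≤ p₂) (hf : Measurable f)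
    (ν : Measure ℝ) (hpos : ∀ᵐ x ∂ν, 0 < f x) (J₂ : ℝ≥0∞)
    (hJ₂ : ∫⁻ x, (ENNReal.ofReal (f x)⁻¹) ^ p₂ ∂ν ≤ J₂)
    (s : Set ℝ) :
    (ν s) ^ (1 + 1/p₂) ≤ J₂ ^ (1/p₂) * ∫⁻ x in s, ENNReal.ofReal (f x) ∂ν := by
  set F : ℝ → ℝ≥0∞ := fun x => ENNReal.ofReal (f x) with hF
  have hFm : Measurable F := hf.ennreal_ofReal
  have hp₂0 : (0:ℝ) < p₂ := by linarith
  set u : ℝ := (p₂ + 1)/p₂ with hu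
  set v : ℝ := p₂ + 1 with hv
  have hu0 : (0:ℝ) < u := by positivity
  have hv0 : (0:ℝ) < v := by positivity
  have hconj : u.HolderConjugate v := by
    rw [Real.holderConjugate_iff]
    constructor
    · rw [hu, lt_div_iff₀ hp₂0]; linarith
    · rw [hu, hv]; field_simp
  have huu : 1/u * u = 1 := by field_simp
  have huv : 1/u * v = p₂ := by rw [hu, hv]; field_simp
  have huv' : 1/v * u = 1/p₂ := by rw [hu, hv]; field_simp
  set A : ℝ → ℝ≥0∞ := fun x => F x ^ (1/u) with hA
  set B : ℝ → ℝ≥0∞ := fun x => (F x)⁻¹ ^ (1/u) with hB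
  have hAB : ∀ᵐ x ∂ν, (1:ℝ≥0∞) = A x * B x := by
    filter_upwards [hpos] with x hx
    have hF0 : F x ≠ 0 := by simp [hF, ENNReal.ofReal_pos.2 hx, (ENNReal.ofReal_pos.2 hx).ne']
    have hFt : F x ≠ ⊤ := ENNReal.ofReal_ne_top
    rw [hA, hB]
    simp only [ENNReal.inv_rpow]
    rw [ENNReal.mul_inv_cancel]
    · simp [ENNReal.rpow_eq_zero_iff, hF0, hFt]
    · exact ENNReal.rpow_ne_top_of_nonneg (by positivity) hFt
  have key : ν s ≤ (∫⁻ x in s, F x ∂ν) ^ (1/u) * J₂ ^ (1/v) := by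
    have h1 : ν s = ∫⁻ x, (A * B) x ∂(ν.restrict s) := by
      rw [← setLIntegral_one]
      exact lintegral_congr_ae (ae_restrict_of_ae hAB)
    have hAm : Measurable A := hFm.pow measurable_const
    have hBm : Measurable B := hFm.inv.pow measurable_const
    have h2 := ENNReal.lintegral_mul_le_Lp_mul_Lq (ν.restrict s) hconj
      hAm.aemeasurable hBm.aemeasurable
    rw [h1]
    refine h2.trans (mul_le_mul' (le_of_eq ?_) (ENNReal.rpow_le_rpow ?_ (by positivity)))
    · congr 1
      refine lintegral_congr fun x => ?_
      rw [hA, ← ENNReal.rpow_mul, huu, ENNReal.rpow_one]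
    · have hBv : ∀ᵐ x ∂(ν.restrict s), B x ^ v = (ENNReal.ofReal (f x)⁻¹) ^ p₂ := by
        filter_upwards [ae_restrict_of_ae hpos] with x hx
        rw [hB, ← ENNReal.rpow_mul, huv, hF, ← ENNReal.ofReal_inv_of_pos hx]
      calc ∫⁻ x, B x ^ v ∂(ν.restrict s)
          = ∫⁻ x in s, (ENNReal.ofReal (f x)⁻¹) ^ p₂ ∂ν := lintegral_congr_ae hBv
        _ ≤ ∫⁻ x, (ENNReal.ofReal (f x)⁻¹) ^ p₂ ∂ν := setLIntegral_le_lintegral _ _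
        _ ≤ J₂ := hJ₂
  have hu1 : 1 + 1/p₂ = u := by rw [hu, hv]; field_simp
  calc (ν s) ^ (1 + 1/p₂) ≤ ((∫⁻ x in s, F x ∂ν) ^ (1/u) * J₂ ^ (1/v)) ^ (1 + 1/p₂) :=
        ENNReal.rpow_le_rpow key (by positivity)
    _ = J₂ ^ (1/p₂) * ∫⁻ x in s, F x ∂ν := by
        rw [hu1, ENNReal.mul_rpow_of_nonneg _ _ hu0.le, ← ENNReal.rpow_mul,
          ← ENNReal.rpow_mul, huu, huv', ENNReal.rpow_one, mul_comm]


/-- The support of a measure: points all of whose balls have positive measure. -/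
def measSupport {X : Type*} [PseudoMetricSpace X] [MeasurableSpace X]
    (μ : Measure X) : Set X :=
  {x | ∀ r : ℝ, 0 < r → μ (Metric.ball x r) ≠ 0}

/-- The Assouad spectrum of a measure at parameter `θ`. -/
noncomputable def measAssouadSpectrum {X : Type*} [PseudoMetricSpace X] [MeasurableSpace X]
    (μ : Measure X) (θ : ℝ) : ℝ :=
  sInf {s : ℝ | 0 ≤ s ∧ ∃ C : ℝ, 0 < C ∧ ∀ x ∈ measSupport μ, ∀ r : ℝ, 0 < r →
    ENNReal.ofReal r < EMetric.diam (measSupport μ) →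
    μ (Metric.closedBall x (r ^ θ)) ≤
      ENNReal.ofReal (C * (r ^ θ / r) ^ s) * μ (Metric.closedBall x r)}

theorem measAssouadSpectrum_le_of_Lp (f : ℝ → ℝ) (p₁ p₂ : ℝ) (hp₁ : 1 ≤ p₁) (hp₂ : 1 ≤ p₂)
    (hf : Measurable f) (μ : Measure ℝ)
    (hμ : μ = (volume.restrict (Set.Icc (0 : ℝ) 1)).withDensity fun x => ENNReal.ofReal (f x))
    (hprob : IsProbabilityMeasure μ)
    (hfpos : ∀ᵐ x ∂(volume.restrict (Set.Icc (0 : ℝ) 1)), 0 < f x)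
    (hfLp : MemLp f (ENNReal.ofReal p₁) (volume.restrict (Set.Icc (0 : ℝ) 1)))
    (hfinvLp : MemLp (fun x => (f x)⁻¹) (ENNReal.ofReal p₂)
      (volume.restrict (Set.Icc (0 : ℝ) 1)))
    (θ : ℝ) (hθ : θ ∈ Set.Ioo (0 : ℝ) 1) :
    measAssouadSpectrum μ θ ≤ 1 + (p₁ + θ * p₂) / (p₁ * p₂ * (1 - θ)) := by
  obtain ⟨hθ0, hθ1⟩ := hθ
  have hp₁0 : (0:ℝ) < p₁ := by linarith
  have hp₂0 : (0:ℝ) < p₂ := by linarith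
  have hθ1' : (0:ℝ) < 1 - θ := by linarith
  set ν : Measure ℝ := volume.restrict (Set.Icc (0:ℝ) 1) with hνdef
  set F : ℝ → ℝ≥0∞ := fun x => ENNReal.ofReal (f x) with hFdef
  set s₀ : ℝ := 1 + (p₁ + θ * p₂) / (p₁ * p₂ * (1 - θ)) with hs₀def
  have hden : (0:ℝ) < p₁ * p₂ * (1 - θ) := mul_pos (mul_pos hp₁0 hp₂0) hθ1'
  have hs₀nonneg : 0 ≤ s₀ := by
    have := div_nonneg (by positivity : (0:ℝ) ≤ p₁ + θ * p₂) hden.le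
    rw [hs₀def]; linarith
  have hexp : θ * (1 - 1/p₁) = (θ - 1) * s₀ + (1 + 1/p₂) := by
    rw [hs₀def]
    field_simp
    ring
  -- finiteness of the two integrals
  have hI₁ : ∫⁻ x, F x ^ p₁ ∂ν < ⊤ := by
    have h1 := (eLpNorm_lt_top_iff_lintegral_rpow_enorm_lt_top
      (by simp only [ne_eq, ENNReal.ofReal_eq_zero, not_le]; linarith)
      ENNReal.ofReal_ne_top).1 hfLp.2
    rw [ENNReal.toReal_ofReal (by linarith)] at h1
    refine lt_of_le_of_lt (lintegral_mono fun x => ?_) h1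
    refine ENNReal.rpow_le_rpow ?_ (by linarith)
    rw [← ofReal_norm, Real.norm_eq_abs]
    exact ENNReal.ofReal_le_ofReal (le_abs_self _)
  have hI₂ : ∫⁻ x, (ENNReal.ofReal (f x)⁻¹) ^ p₂ ∂ν < ⊤ := by
    have h1 := (eLpNorm_lt_top_iff_lintegral_rpow_enorm_lt_top
      (by simp only [ne_eq, ENNReal.ofReal_eq_zero, not_le]; linarith)
      ENNReal.ofReal_ne_top).1 hfinvLp.2
    rw [ENNReal.toReal_ofReal (by linarith)] at h1
    refine lt_of_le_of_lt (lintegral_mono fun x => ?_) h1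
    refine ENNReal.rpow_le_rpow ?_ (by linarith)
    rw [← ofReal_norm, Real.norm_eq_abs]
    exact ENNReal.ofReal_le_ofReal (le_abs_self _)
  set J₁ : ℝ≥0∞ := (∫⁻ x, F x ^ p₁ ∂ν) ⊔ 1 with hJ₁def
  set J₂ : ℝ≥0∞ := (∫⁻ x, (ENNReal.ofReal (f x)⁻¹) ^ p₂ ∂ν) ⊔ 1 with hJ₂def
  have hJ₁top : J₁ ≠ ⊤ := by simp [hJ₁def, hI₁.ne]
  have hJ₂top : J₂ ≠ ⊤ := by simp [hJ₂def, hI₂.ne]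
  have hJ₁0 : J₁ ≠ 0 := by simp [hJ₁def]
  have hJ₂0 : J₂ ≠ 0 := by simp [hJ₂def]
  set K : ℝ≥0∞ := J₁ ^ (1/p₁) * J₂ ^ (1/p₂) with hKdef
  have hKtop : K ≠ ⊤ := ENNReal.mul_ne_top
    (ENNReal.rpow_lt_top_of_nonneg (by positivity) hJ₁top).ne
    (ENNReal.rpow_lt_top_of_nonneg (by positivity) hJ₂top).ne
  have hK0 : K ≠ 0 := mul_ne_zero
    (ENNReal.rpow_pos (pos_iff_ne_zero.2 hJ₁0) hJ₁top).ne'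
    (ENNReal.rpow_pos (pos_iff_ne_zero.2 hJ₂0) hJ₂top).ne'
  set C : ℝ := 2 * K.toReal with hCdef
  have hC : 0 < C := by
    have := ENNReal.toReal_pos hK0 hKtop
    rw [hCdef]; linarith
  -- the support is contained in [0,1]
  have hsupp : measSupport μ ⊆ Set.Icc (0:ℝ) 1 := by
    intro x hx
    by_contra hxI
    simp only [Set.mem_Icc, not_and_or, not_le] at hxI
    have hxball : ∃ ε : ℝ, 0 < ε ∧ Metric.ball x ε ∩ Set.Icc (0:ℝ) 1 = ∅ := by
      rcases hxI with h | h
      · refine ⟨-x, by linarith, Set.eq_empty_iff_forall_notMem.2 fun y hy => ?_⟩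
        rw [Real.ball_eq_Ioo] at hy
        obtain ⟨⟨h1, h2⟩, h3, h4⟩ := hy
        linarith
      · refine ⟨x - 1, by linarith, Set.eq_empty_iff_forall_notMem.2 fun y hy => ?_⟩
        rw [Real.ball_eq_Ioo] at hy
        obtain ⟨⟨h1, h2⟩, h3, h4⟩ := hy
        linarith
    obtain ⟨ε, hε, hball⟩ := hxball
    have hνball : ν (Metric.ball x ε) = 0 := by
      rw [hνdef, Measure.restrict_apply measurableSet_ball, hball]
      simp
    have : μ (Metric.ball x ε) = 0 := by
      rw [hμ, withDensity_apply _ measurableSet_ball]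
      exact setLIntegral_measure_zero _ _ hνball
    exact hx ε hε this
  have hdiam : EMetric.diam (measSupport μ) ≤ ENNReal.ofReal 1 := by
    calc EMetric.diam (measSupport μ) ≤ EMetric.diam (Set.Icc (0:ℝ) 1) :=
        EMetric.diam_mono hsupp
      _ = ENNReal.ofReal 1 := by show Metric.ediam (Set.Icc (0:ℝ) 1) = _; rw [Real.ediam_Icc]; norm_num
  -- main estimate
  refine csInf_le ⟨0, fun s hs => hs.1⟩ ⟨hs₀nonneg, C, hC, ?_⟩
  intro x hx r hr hrd
  obtain ⟨hx0, hx2⟩ := hsupp hx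
  have hr1 : r < 1 := by
    have := hrd.trans_le hdiam
    exact (ENNReal.ofReal_lt_ofReal_iff one_pos).1 this
  have hrθ : 0 < r ^ θ := Real.rpow_pos_of_pos hr θ
  set R : ℝ≥0∞ := ENNReal.ofReal r with hRdef
  have hR0 : R ≠ 0 := by simp [hRdef, hr, hr.le, ENNReal.ofReal_eq_zero, not_le]
  have hRtop : R ≠ ⊤ := ENNReal.ofReal_ne_top
  -- upper bound for the big ball
  have hA : μ (Metric.closedBall x (r ^ θ)) ≤
      J₁ ^ (1/p₁) * (2 * R ^ θ) ^ (1 - 1/p₁) := by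
    rw [hμ, withDensity_apply _ measurableSet_closedBall]
    refine (aux_upper f p₁ hp₁ hf ν J₁ le_sup_left _ measurableSet_closedBall).trans ?_
    have hcb : ν (Metric.closedBall x (r ^ θ)) ≤ 2 * R ^ θ := by
      calc ν (Metric.closedBall x (r ^ θ)) ≤ volume (Metric.closedBall x (r ^ θ)) := by
            rw [hνdef, Measure.restrict_apply measurableSet_closedBall]
            exact measure_mono Set.inter_subset_left
        _ = ENNReal.ofReal (2 * r ^ θ) := Real.volume_closedBall _ _
        _ = 2 * R ^ θ := by
            rw [ENNReal.ofReal_mul (by norm_num), hRdef, ENNReal.ofReal_rpow_of_pos hr]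
            norm_num
    have hpow1 : (0:ℝ) ≤ 1 - 1/p₁ := by
      have : 1/p₁ ≤ 1 := by rw [div_le_one hp₁0]; linarith
      linarith
    exact mul_le_mul_right (ENNReal.rpow_le_rpow hcb hpow1) _
  -- lower bound for the small ball
  have hB : R ^ (1 + 1/p₂) ≤ J₂ ^ (1/p₂) * μ (Metric.closedBall x r) := by
    rw [hμ, withDensity_apply _ measurableSet_closedBall]
    refine le_trans ?_ (aux_lower f p₂ hp₂ hf ν hfpos J₂ le_sup_left _)
    refine ENNReal.rpow_le_rpow ?_ (by positivity)
    rw [hνdef, Measure.restrict_apply measurableSet_closedBall,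
      Real.closedBall_eq_Icc, Set.Icc_inter_Icc, Real.volume_Icc, hRdef]
    refine ENNReal.ofReal_le_ofReal ?_
    have hmax : (x - r) ⊔ 0 + r ≤ (x + r) ⊓ 1 := by
      rcases le_total (x - r) 0 with h | h
      · rw [sup_eq_right.2 h]
        exact le_inf (by linarith) (by linarith)
      · rw [sup_eq_left.2 h]
        exact le_inf (by linarith) (by linarith)
    linarith
  -- constant computation
  have e1 : ENNReal.ofReal (C * (r ^ θ / r) ^ s₀) = 2 * K * R ^ ((θ - 1) * s₀) := by
    have h2 : r ^ θ / r = r ^ (θ - 1) := by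
      rw [Real.rpow_sub hr, Real.rpow_one]
    rw [h2, ← Real.rpow_mul hr.le, hCdef,
      ENNReal.ofReal_mul (by positivity : (0:ℝ) ≤ 2 * K.toReal),
      ENNReal.ofReal_mul (by norm_num : (0:ℝ) ≤ 2),
      ENNReal.ofReal_toReal hKtop, ENNReal.ofReal_rpow_of_pos hr]
    norm_num
  -- assembly
  have hsplit : R ^ (θ * (1 - 1/p₁)) = R ^ ((θ - 1) * s₀) * R ^ (1 + 1/p₂) := by
    rw [hexp, ENNReal.rpow_add _ _ hR0 hRtop]
  have htwo : ((2:ℝ≥0∞)) ^ (1 - 1/p₁) ≤ 2 := by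
    calc ((2:ℝ≥0∞)) ^ (1 - 1/p₁) ≤ ((2:ℝ≥0∞)) ^ (1:ℝ) :=
        ENNReal.rpow_le_rpow_of_exponent_le (by norm_num) (by
          have : 0 ≤ 1/p₁ := by positivity
          linarith)
      _ = 2 := ENNReal.rpow_one _
  have hpow1 : (0:ℝ) ≤ 1 - 1/p₁ := by
    have : 1/p₁ ≤ 1 := by rw [div_le_one hp₁0]; linarith
    linarith
  calc μ (Metric.closedBall x (r ^ θ))
      ≤ J₁ ^ (1/p₁) * (2 * R ^ θ) ^ (1 - 1/p₁) := hA
    _ = J₁ ^ (1/p₁) * ((2:ℝ≥0∞)) ^ (1 - 1/p₁) * R ^ (θ * (1 - 1/p₁)) := by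
        rw [ENNReal.mul_rpow_of_nonneg _ _ hpow1, ← ENNReal.rpow_mul, mul_assoc]
    _ ≤ J₁ ^ (1/p₁) * 2 * (R ^ ((θ - 1) * s₀) * R ^ (1 + 1/p₂)) := by
        rw [← hsplit]
        exact mul_le_mul_left (mul_le_mul_right htwo _) _
    _ ≤ J₁ ^ (1/p₁) * 2 * (R ^ ((θ - 1) * s₀) * (J₂ ^ (1/p₂) * μ (Metric.closedBall x r))) := by
        exact mul_le_mul_right (mul_le_mul_right hB _) _
    _ = (2 * K * R ^ ((θ - 1) * s₀)) * μ (Metric.closedBall x r) := by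
        rw [hKdef]; ring
    _ = ENNReal.ofReal (C * (r ^ θ / r) ^ s₀) * μ (Metric.closedBall x r) := by
        rw [e1]
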